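/- For every a > 0, λ > 0 and every ν with 0 ≤ ν < 3/4, one has ∫₀^∞ p^{4ν+1} · J₀(p a)² / (p² + λ)² dp < ∞, where J₀(z) := (1/2π) ∫₀^{2π} e^{i z cos θ} dθ. (This is the key estimate showing that the map τ ↦ (U₀(τ) K₀(√λ|·−y_k|))(y_j) belongs to H^ν(0,T) for every ν < 3/4 when y_j ≠ y_k.) -/

import Mathlib

open MeasureTheory Real Filter

/-- The Bessel function of the first kind of order `0`:
`J₀(z) = (1/2π) ∫₀^{2π} e^{i z cos θ} dθ`. -/
noncomputable def besselJ0 (z : ℝ) : ℂ :=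
  ((1 / (2 * Real.pi) : ℝ) : ℂ) *
    ∫ θ in (0:ℝ)..(2 * Real.pi), Complex.exp (Complex.I * z * Real.cos θ)

lemma osc_cont (x : ℝ) : Continuous fun θ : ℝ => Complex.exp (Complex.I * x * Real.cos θ) := by
  fun_prop

lemma osc_norm (x θ : ℝ) : ‖Complex.exp (Complex.I * x * Real.cos θ)‖ = 1 := by
  have h : (Complex.I * x * Real.cos θ).re = 0 := by simp [Complex.mul_re]
  rw [Complex.norm_exp, h, Real.exp_zero]

lemma osc_middle (x δ : ℝ) (hx : 1 ≤ x) (hδ0 : 0 < δ) (hδ1 : δ ≤ 1) :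
    ‖∫ θ in δ..(π - δ), Complex.exp (Complex.I * x * Real.cos θ)‖ ≤ 2 * π / (x * δ) := by
  have hπ : (3:ℝ) < π := Real.pi_gt_three
  have hle : δ ≤ π - δ := by linarith
  have hIcc : Set.uIcc δ (π - δ) = Set.Icc δ (π - δ) := Set.uIcc_of_le hle
  have hx0 : (0:ℝ) < x := by linarith
  set f : ℝ → ℂ := fun θ => Complex.exp (Complex.I * x * Real.cos θ) with hf
  have hsin : ∀ θ ∈ Set.Icc δ (π - δ), 0 < Real.sin θ := by
    intro θ hθ
    exact Real.sin_pos_of_pos_of_lt_pi (lt_of_lt_of_le hδ0 hθ.1) (lt_of_le_of_lt hθ.2 (by linarith))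
  set u : ℝ → ℂ := fun θ => (((Real.sin θ)⁻¹ : ℝ) : ℂ) with hu
  set u' : ℝ → ℂ := fun θ => ((-Real.cos θ / (Real.sin θ) ^ 2 : ℝ) : ℂ) with hu'
  set v' : ℝ → ℂ := fun θ => (Complex.I * x * -(Real.sin θ : ℂ)) * f θ with hv'
  have hud : ∀ θ ∈ Set.uIcc δ (π - δ), HasDerivAt u (u' θ) θ := by
    intro θ hθ
    rw [hIcc] at hθ
    exact ((Real.hasDerivAt_sin θ).inv (hsin θ hθ).ne').ofReal_comp
  have hvd : ∀ θ : ℝ, HasDerivAt f (v' θ) θ := by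
    intro θ
    have hc : HasDerivAt (fun t : ℝ => ((Real.cos t : ℝ) : ℂ)) ((-Real.sin θ : ℝ) : ℂ) θ :=
      (Real.hasDerivAt_cos θ).ofReal_comp
    have h2 := (hc.const_mul (Complex.I * x)).cexp
    rw [hv', hf]
    convert h2 using 1
    push_cast
    ring
  have hu'cont : ContinuousOn u' (Set.Icc δ (π - δ)) := by
    apply Complex.continuous_ofReal.comp_continuousOn
    exact Real.continuous_cos.continuousOn.neg.div
      (Real.continuous_sin.pow 2).continuousOn
      (fun θ hθ => pow_ne_zero 2 (hsin θ hθ).ne')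
  have hu'int : IntervalIntegrable u' volume δ (π - δ) :=
    (hu'cont.mono (by rw [hIcc])).intervalIntegrable
  have hv'int : IntervalIntegrable v' volume δ (π - δ) := by
    apply Continuous.intervalIntegrable
    fun_prop
  have ibp := intervalIntegral.integral_mul_deriv_eq_deriv_mul
      (fun θ hθ => hud θ hθ) (fun θ _ => hvd θ) hu'int hv'int
  have hlhs : (∫ θ in δ..(π - δ), u θ * v' θ) = (-(Complex.I * x)) * ∫ θ in δ..(π - δ), f θ := by
    rw [← intervalIntegral.integral_const_mul]
    apply intervalIntegral.integral_congr
    intro θ hθ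
    rw [hIcc] at hθ
    have hs : (Real.sin θ : ℂ) ≠ 0 := by exact_mod_cast (hsin θ hθ).ne'
    show (((Real.sin θ)⁻¹ : ℝ) : ℂ) * (Complex.I * x * -(Real.sin θ : ℂ) * f θ) =
      -(Complex.I * x) * f θ
    have hs' : Complex.sin (θ:ℂ) ≠ 0 := by rwa [← Complex.ofReal_sin]
    rw [Complex.ofReal_inv]
    field_simp
  rw [hlhs] at ibp
  have hIx : (-(Complex.I * x)) ≠ 0 := by
    simp [Complex.ext_iff, hx0.ne']
  have hsol : (∫ θ in δ..(π - δ), f θ) =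
      (-(Complex.I * x))⁻¹ * (u (π - δ) * f (π - δ) - u δ * f δ - ∫ θ in δ..(π - δ), u' θ * f θ) := by
    rw [← ibp, ← mul_assoc, inv_mul_cancel₀ hIx, one_mul]
  have hsd : 0 < Real.sin δ := hsin δ ⟨le_refl _, hle⟩
  have hsinlb : 2 / π * δ ≤ Real.sin δ := Real.mul_le_sin hδ0.le (by linarith)
  have hnf : ∀ θ, ‖f θ‖ = 1 := fun θ => osc_norm x θ
  have hFTC : (∫ θ in δ..(π - δ), ((Real.sin θ) ^ 2)⁻¹) = 2 * Real.cos δ / Real.sin δ := by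
    have hder : ∀ θ ∈ Set.uIcc δ (π - δ),
        HasDerivAt (fun t => -Real.cos t / Real.sin t) (((Real.sin θ) ^ 2)⁻¹) θ := by
      intro θ hθ
      rw [hIcc] at hθ
      have hs2 : Real.sin θ ≠ 0 := (hsin θ hθ).ne'
      have h := ((Real.hasDerivAt_cos θ).neg).div (Real.hasDerivAt_sin θ) hs2
      refine h.congr_deriv ?_
      rw [Pi.neg_apply, eq_comm, eq_div_iff (pow_ne_zero 2 hs2), inv_mul_cancel₀ (pow_ne_zero 2 hs2)]
      nlinarith [Real.sin_sq_add_cos_sq θ]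
    have hint : IntervalIntegrable (fun θ => ((Real.sin θ) ^ 2)⁻¹) volume δ (π - δ) := by
      apply ContinuousOn.intervalIntegrable
      rw [hIcc]
      exact ContinuousOn.inv₀ (Real.continuous_sin.pow 2).continuousOn
        (fun θ hθ => pow_ne_zero 2 (hsin θ hθ).ne')
    rw [intervalIntegral.integral_eq_sub_of_hasDerivAt (fun θ hθ => hder θ hθ) hint]
    rw [Real.cos_pi_sub, Real.sin_pi_sub]
    ring
  have hbd2 : ‖∫ θ in δ..(π - δ), u' θ * f θ‖ ≤ 2 / Real.sin δ := by
    have hint : IntervalIntegrable (fun θ => ((Real.sin θ) ^ 2)⁻¹) volume δ (π - δ) := by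
      apply ContinuousOn.intervalIntegrable
      rw [hIcc]
      exact ContinuousOn.inv₀ (Real.continuous_sin.pow 2).continuousOn
        (fun θ hθ => pow_ne_zero 2 (hsin θ hθ).ne')
    have h1 : ‖∫ θ in δ..(π - δ), u' θ * f θ‖ ≤ |∫ θ in δ..(π - δ), ((Real.sin θ) ^ 2)⁻¹| := by
      apply intervalIntegral.norm_integral_le_abs_of_norm_le _ hint
      rw [ae_restrict_iff' measurableSet_uIoc]
      apply Filter.Eventually.of_forall
      intro θ hθ
      have hθ' : θ ∈ Set.Icc δ (π - δ) := by
        rw [Set.uIoc_of_le hle] at hθ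
        exact ⟨hθ.1.le, hθ.2⟩
      have hs : 0 < Real.sin θ := hsin θ hθ'
      have hs2 : (0:ℝ) < Real.sin θ ^ 2 := by positivity
      simp only [hu', norm_mul, hnf, mul_one, Complex.norm_real, Real.norm_eq_abs]
      rw [abs_div, abs_neg, abs_of_pos hs2]
      calc |Real.cos θ| / Real.sin θ ^ 2 ≤ 1 / Real.sin θ ^ 2 := by
            gcongr
            exact Real.abs_cos_le_one θ
        _ = (Real.sin θ ^ 2)⁻¹ := one_div _
    rw [hFTC] at h1
    refine h1.trans ?_
    rw [abs_div, abs_of_pos hsd]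
    refine div_le_div₀ (by norm_num) ?_ hsd le_rfl
    rw [abs_mul, abs_two]
    nlinarith [Real.abs_cos_le_one δ, abs_nonneg (Real.cos δ)]
  -- assemble
  have hnormIx : ‖(-(Complex.I * (x:ℂ)))⁻¹‖ = x⁻¹ := by
    rw [norm_inv, norm_neg, norm_mul, Complex.norm_I, one_mul, Complex.norm_real,
      Real.norm_eq_abs, abs_of_pos hx0]
  have hnu1 : ‖u δ‖ = (Real.sin δ)⁻¹ := by
    rw [hu]
    simp only [Complex.norm_real, Real.norm_eq_abs]
    rw [abs_inv, abs_of_pos hsd]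
  have hnu2 : ‖u (π - δ)‖ = (Real.sin δ)⁻¹ := by
    rw [hu]
    simp only [Complex.norm_real, Real.norm_eq_abs]
    rw [Real.sin_pi_sub, abs_inv, abs_of_pos hsd]
  have hbound : ‖∫ θ in δ..(π - δ), f θ‖ ≤ x⁻¹ * (4 / Real.sin δ) := by
    rw [hsol, norm_mul, hnormIx]
    gcongr
    calc ‖u (π - δ) * f (π - δ) - u δ * f δ - ∫ θ in δ..(π - δ), u' θ * f θ‖
        ≤ ‖u (π - δ) * f (π - δ) - u δ * f δ‖ + ‖∫ θ in δ..(π - δ), u' θ * f θ‖ :=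
          norm_sub_le _ _
      _ ≤ (‖u (π - δ) * f (π - δ)‖ + ‖u δ * f δ‖) + ‖∫ θ in δ..(π - δ), u' θ * f θ‖ := by
          gcongr
          exact norm_sub_le _ _
      _ ≤ ((Real.sin δ)⁻¹ + (Real.sin δ)⁻¹) + 2 / Real.sin δ := by
          rw [norm_mul, norm_mul, hnf, hnf, mul_one, mul_one, hnu1, hnu2]
          gcongr
      _ = 4 / Real.sin δ := by
          rw [inv_eq_one_div]
          ring
  refine hbound.trans ?_
  have h4 : 4 / Real.sin δ ≤ 2 * π / δ := by
    have hπ0 : (0:ℝ) < π := Real.pi_pos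
    have h5 := mul_le_mul_of_nonneg_left hsinlb hπ0.le
    have h6 : π * (2 / π * δ) = 2 * δ := by field_simp
    rw [div_le_div_iff₀ hsd hδ0]
    nlinarith
  calc x⁻¹ * (4 / Real.sin δ) ≤ x⁻¹ * (2 * π / δ) := by
        gcongr
    _ = 2 * π / (x * δ) := by
        field_simp

lemma osc_intable (x a b : ℝ) :
    IntervalIntegrable (fun θ : ℝ => Complex.exp (Complex.I * x * Real.cos θ)) volume a b :=
  (osc_cont x).intervalIntegrable a b

lemma osc_two_pi (x : ℝ) :
    (∫ θ in (0:ℝ)..(2 * π), Complex.exp (Complex.I * x * Real.cos θ)) =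
      2 * ∫ θ in (0:ℝ)..π, Complex.exp (Complex.I * x * Real.cos θ) := by
  set f : ℝ → ℂ := fun θ => Complex.exp (Complex.I * x * Real.cos θ) with hf
  have h1 : (∫ θ in (0:ℝ)..π, f θ) + (∫ θ in π..(2 * π), f θ) = ∫ θ in (0:ℝ)..(2 * π), f θ :=
    intervalIntegral.integral_add_adjacent_intervals (osc_intable x 0 π) (osc_intable x π (2 * π))
  have h2 : (∫ θ in π..(2 * π), f θ) = ∫ θ in (0:ℝ)..π, f θ := by
    have h3 := intervalIntegral.integral_comp_sub_left (a := 0) (b := π) f (2 * π)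
    have h4 : (∫ θ in (0:ℝ)..π, f (2 * π - θ)) = ∫ θ in (0:ℝ)..π, f θ := by
      apply intervalIntegral.integral_congr
      intro θ _
      simp only [hf]
      rw [Real.cos_sub, Real.cos_two_pi, Real.sin_two_pi]
      ring_nf
    rw [h4] at h3
    rw [h3, show 2 * π - π = π by ring, sub_zero]
  rw [← h1, h2]
  ring

lemma besselJ0_abs_le_one (x : ℝ) : ‖besselJ0 x‖ ≤ 1 := by
  rw [besselJ0, norm_mul]
  have h1 : ‖((1 / (2 * π) : ℝ) : ℂ)‖ = 1 / (2 * π) := by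
    rw [Complex.norm_real, Real.norm_eq_abs, abs_of_pos (by positivity)]
  have h2 : ‖∫ θ in (0:ℝ)..(2 * π), Complex.exp (Complex.I * x * Real.cos θ)‖
      ≤ 1 * |2 * π - 0| := by
    apply intervalIntegral.norm_integral_le_of_norm_le_const
    intro θ _
    rw [osc_norm]
  rw [h1]
  have hπ : (0:ℝ) < π := Real.pi_pos
  calc 1 / (2 * π) * ‖∫ θ in (0:ℝ)..(2 * π), Complex.exp (Complex.I * x * Real.cos θ)‖
      ≤ 1 / (2 * π) * (1 * |2 * π - 0|) := by
        apply mul_le_mul_of_nonneg_left h2 (by positivity)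
    _ = 1 := by
        rw [sub_zero, abs_of_pos (by positivity)]
        field_simp

lemma besselJ0_decay {x : ℝ} (hx : 1 ≤ x) : ‖besselJ0 x‖ ≤ 3 / Real.sqrt x := by
  have hπ : (3:ℝ) < π := Real.pi_gt_three
  have hx0 : (0:ℝ) < x := by linarith
  have hsx1 : 1 ≤ Real.sqrt x := by
    rw [show (1:ℝ) = Real.sqrt 1 by simp]
    exact Real.sqrt_le_sqrt hx
  have hsx0 : 0 < Real.sqrt x := by linarith
  set δ : ℝ := (Real.sqrt x)⁻¹ with hδ
  have hδ0 : 0 < δ := by positivity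
  have hδ1 : δ ≤ 1 := by
    rw [hδ, inv_le_one_iff₀]
    right; exact hsx1
  have hle1 : δ ≤ π - δ := by linarith
  set f : ℝ → ℂ := fun θ => Complex.exp (Complex.I * x * Real.cos θ) with hf
  have hsplit : (∫ θ in (0:ℝ)..π, f θ) =
      (∫ θ in (0:ℝ)..δ, f θ) + (∫ θ in δ..(π - δ), f θ) + ∫ θ in (π - δ)..π, f θ := by
    rw [intervalIntegral.integral_add_adjacent_intervals (osc_intable x 0 δ)
      (osc_intable x δ (π - δ)), intervalIntegral.integral_add_adjacent_intervals
      (osc_intable x 0 (π - δ)) (osc_intable x (π - δ) π)]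
  have hend1 : ‖∫ θ in (0:ℝ)..δ, f θ‖ ≤ δ := by
    have := intervalIntegral.norm_integral_le_of_norm_le_const
      (C := 1) (f := f) (a := 0) (b := δ) (fun θ _ => le_of_eq (osc_norm x θ))
    rw [sub_zero, one_mul, abs_of_pos hδ0] at this
    exact this
  have hend2 : ‖∫ θ in (π - δ)..π, f θ‖ ≤ δ := by
    have := intervalIntegral.norm_integral_le_of_norm_le_const
      (C := 1) (f := f) (a := π - δ) (b := π) (fun θ _ => le_of_eq (osc_norm x θ))
    rw [one_mul, show π - (π - δ) = δ by ring, abs_of_pos hδ0] at this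
    exact this
  have hmid : ‖∫ θ in δ..(π - δ), f θ‖ ≤ 2 * π / (x * δ) := osc_middle x δ hx hδ0 hδ1
  have hxδ : x * δ = Real.sqrt x := by
    rw [hδ]
    rw [← div_eq_mul_inv, Real.div_sqrt]
  have hhalf : ‖∫ θ in (0:ℝ)..π, f θ‖ ≤ (2 + 2 * π) / Real.sqrt x := by
    rw [hsplit]
    calc ‖(∫ θ in (0:ℝ)..δ, f θ) + (∫ θ in δ..(π - δ), f θ) + ∫ θ in (π - δ)..π, f θ‖
        ≤ ‖(∫ θ in (0:ℝ)..δ, f θ) + (∫ θ in δ..(π - δ), f θ)‖ + ‖∫ θ in (π - δ)..π, f θ‖ :=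
          norm_add_le _ _
      _ ≤ (‖∫ θ in (0:ℝ)..δ, f θ‖ + ‖∫ θ in δ..(π - δ), f θ‖) + ‖∫ θ in (π - δ)..π, f θ‖ := by
          gcongr; exact norm_add_le _ _
      _ ≤ (δ + 2 * π / (x * δ)) + δ := by gcongr
      _ = (2 + 2 * π) / Real.sqrt x := by
          rw [hxδ, hδ]
          rw [inv_eq_one_div]
          field_simp
          ring
  have htot : ‖∫ θ in (0:ℝ)..(2 * π), f θ‖ ≤ 2 * ((2 + 2 * π) / Real.sqrt x) := by
    rw [osc_two_pi x, norm_mul]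
    have h2 : ‖(2:ℂ)‖ = 2 := by norm_num
    rw [h2]
    exact mul_le_mul_of_nonneg_left hhalf (by norm_num)
  rw [besselJ0, norm_mul, Complex.norm_real, Real.norm_eq_abs, abs_of_pos (by positivity : (0:ℝ) < 1 / (2 * π))]
  calc 1 / (2 * π) * ‖∫ θ in (0:ℝ)..(2 * π), f θ‖
      ≤ 1 / (2 * π) * (2 * ((2 + 2 * π) / Real.sqrt x)) := by
        apply mul_le_mul_of_nonneg_left _ (by positivity)
        exact htot
    _ = (2 / π + 2) / Real.sqrt x := by field_simp
    _ ≤ 3 / Real.sqrt x := by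
        have h2π : 2 / π ≤ 1 := by
          rw [div_le_one (by linarith)]
          linarith
        gcongr
        linarith

lemma besselJ0_continuous : Continuous besselJ0 := by
  apply continuous_const.mul
  exact intervalIntegral.continuous_parametric_intervalIntegral_of_continuous'
    (f := fun (z : ℝ) (θ : ℝ) => Complex.exp (Complex.I * z * Real.cos θ)) (by fun_prop) 0 (2 * π)

/-- For `a > 0`, `λ > 0` and `0 ≤ ν < 3/4`, one has
`∫₀^∞ p^(4ν+1) J₀(pa)²/(p²+λ)² dp < ∞`. -/
theorem besselJ0_weighted_square_integrable (a lam ν : ℝ)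
    (ha : 0 < a) (hlam : 0 < lam) (hν₀ : 0 ≤ ν) (hν : ν < 3 / 4) :
    IntegrableOn
      (fun p : ℝ => p ^ (4 * ν + 1) * ‖besselJ0 (p * a)‖ ^ 2 / (p ^ 2 + lam) ^ 2)
      (Set.Ioi 0) volume := by
  set f : ℝ → ℝ :=
    fun p : ℝ => p ^ (4 * ν + 1) * ‖besselJ0 (p * a)‖ ^ 2 / (p ^ 2 + lam) ^ 2 with hfdef
  have hnonneg : ∀ p : ℝ, 0 < p → 0 ≤ f p := by
    intro p hp
    have h1 : 0 ≤ p ^ (4 * ν + 1) := Real.rpow_nonneg hp.le _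
    have h2 : 0 ≤ ‖besselJ0 (p * a)‖ ^ 2 := by positivity
    have h3 : 0 < (p ^ 2 + lam) ^ 2 := by positivity
    positivity
  have hmeas : AEStronglyMeasurable f (volume.restrict (Set.Ioi 0)) := by
    apply ContinuousOn.aestronglyMeasurable _ measurableSet_Ioi
    apply ContinuousOn.div
    · apply ContinuousOn.mul
      · intro p hp
        exact (Real.continuousAt_rpow_const p _ (Or.inl (ne_of_gt hp))).continuousWithinAt
      · exact ((continuous_norm.comp
          (besselJ0_continuous.comp (continuous_id.mul continuous_const))).pow 2).continuousOn
    · fun_prop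
    · intro p _
      positivity
  set R : ℝ := max 1 a⁻¹ with hRdef
  have hR1 : (1:ℝ) ≤ R := le_max_left _ _
  have hRa : a⁻¹ ≤ R := le_max_right _ _
  have hR0 : (0:ℝ) < R := lt_of_lt_of_le one_pos hR1
  have hunion : Set.Ioc (0:ℝ) R ∪ Set.Ioi R = Set.Ioi (0:ℝ) := Set.Ioc_union_Ioi_eq_Ioi hR0.le
  rw [← hunion]
  apply IntegrableOn.union
  · -- on (0, R]
    have hmeas1 : AEStronglyMeasurable f (volume.restrict (Set.Ioc 0 R)) :=
      hmeas.mono_measure (Measure.restrict_mono Set.Ioc_subset_Ioi_self le_rfl)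
    apply Integrable.mono' (g := fun _ => R ^ (4 * ν + 1) / lam ^ 2) _ hmeas1
    · rw [ae_restrict_iff' measurableSet_Ioc]
      apply Filter.Eventually.of_forall
      intro p hp
      rw [Real.norm_eq_abs, abs_of_nonneg (hnonneg p hp.1)]
      have hnum : p ^ (4 * ν + 1) * ‖besselJ0 (p * a)‖ ^ 2 ≤ R ^ (4 * ν + 1) := by
        calc p ^ (4 * ν + 1) * ‖besselJ0 (p * a)‖ ^ 2
            ≤ R ^ (4 * ν + 1) * 1 := by
              apply mul_le_mul
              · exact Real.rpow_le_rpow hp.1.le hp.2 (by linarith)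
              · exact pow_le_one₀ (by positivity) (besselJ0_abs_le_one _)
              · positivity
              · positivity
          _ = R ^ (4 * ν + 1) := mul_one _
      have hden : lam ^ 2 ≤ (p ^ 2 + lam) ^ 2 := by nlinarith [sq_nonneg p]
      exact div_le_div₀ (by positivity) hnum (by positivity) hden
    · exact integrableOn_const measure_Ioc_lt_top.ne
  · -- on (R, ∞)
    have hmeas2 : AEStronglyMeasurable f (volume.restrict (Set.Ioi R)) :=
      hmeas.mono_measure (Measure.restrict_mono (Set.Ioi_subset_Ioi hR0.le) le_rfl)
    have hexp : 4 * ν - 4 < -1 := by linarith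
    have hint : IntegrableOn (fun p : ℝ => 9 / a * p ^ (4 * ν - 4)) (Set.Ioi R) volume :=
      (integrableOn_Ioi_rpow_of_lt hexp hR0).const_mul _
    apply Integrable.mono' hint hmeas2
    rw [ae_restrict_iff' measurableSet_Ioi]
    apply Filter.Eventually.of_forall
    intro p hp
    rw [Set.mem_Ioi] at hp
    have hp0 : (0:ℝ) < p := lt_of_lt_of_le hR0 hp.le
    have hpa : (1:ℝ) ≤ p * a := by
      have h1 : a⁻¹ < p := lt_of_le_of_lt hRa hp
      calc (1:ℝ) = a⁻¹ * a := by field_simp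
        _ ≤ p * a := by
            apply mul_le_mul_of_nonneg_right h1.le ha.le
    have hpa0 : (0:ℝ) < p * a := by positivity
    have habs : ‖besselJ0 (p * a)‖ ^ 2 ≤ 9 / (p * a) := by
      have h1 := besselJ0_decay hpa
      calc ‖besselJ0 (p * a)‖ ^ 2 ≤ (3 / Real.sqrt (p * a)) ^ 2 := by
            apply pow_le_pow_left₀ (by positivity) h1
        _ = 9 / (p * a) := by
            rw [div_pow, Real.sq_sqrt hpa0.le]
            norm_num
    rw [Real.norm_eq_abs, abs_of_nonneg (hnonneg p hp0)]
    have hden : p ^ 4 ≤ (p ^ 2 + lam) ^ 2 := by nlinarith [sq_nonneg p, hp0]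
    have hstep : f p ≤ p ^ (4 * ν + 1) * (9 / (p * a)) / p ^ 4 := by
      apply div_le_div₀ (by positivity) _ (by positivity) hden
      exact mul_le_mul_of_nonneg_left habs (Real.rpow_nonneg hp0.le _)
    refine hstep.trans (le_of_eq ?_)
    have h5 : p ^ (4 * ν + 1) = p ^ (4 * ν - 4) * p ^ (5:ℕ) := by
      rw [← Real.rpow_natCast p 5, ← Real.rpow_add hp0]
      norm_num
      congr 1
      ring
    rw [h5]
    field_simp
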